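/- If every vertex i satisfies n_i ≠ 0 for every solution of the adjunction system with negative definite intersection form, then the system has only finitely many solutions (n, e) ∈ (ℕ₊)^V × (ℕ₊)^V. -/

import Mathlib

open Finset

/-- If every vertex satisfies `n i ≠ 0` for every solution of the adjunction system
with negative definite intersection form, then there are only finitely many solutions
`(n, e) ∈ (ℕ₊)^V × (ℕ₊)^V`. -/
theorem stmt_2 {V : Type*} [Fintype V] [DecidableEq V]
    (w : V → V → ℕ) (hsymm : ∀ i j, w i j = w j i) (hdiag : ∀ i, w i i = 0)
    (hconn : (SimpleGraph.fromRel (fun i j => 0 < w i j)).Connected)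
    (q : V → ℤ)
    (h : ∀ n e : V → ℕ, (∀ j, 1 ≤ e j) →
      (∀ j, (e j : ℤ) * n j = q j + ∑ k ∈ univ.erase j, (w j k : ℤ) * n k) →
      (∀ x : V → ℝ, x ≠ 0 →
        ∑ j, x j * (-(e j : ℝ) * x j + ∑ k ∈ univ.erase j, (w j k : ℝ) * x k) < 0) →
      ∀ i, n i ≠ 0) :
    {s : (V → ℕ) × (V → ℕ) | (∀ j, 1 ≤ s.1 j) ∧ (∀ j, 1 ≤ s.2 j) ∧
      (∀ j, (s.2 j : ℤ) * s.1 j = q j + ∑ k ∈ univ.erase j, (w j k : ℤ) * s.1 k) ∧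
      (∀ x : V → ℝ, x ≠ 0 →
        ∑ j, x j * (-(s.2 j : ℝ) * x j + ∑ k ∈ univ.erase j, (w j k : ℝ) * x k) < 0)}.Finite := by
  classical
  set S : Set ((V → ℕ) × (V → ℕ)) :=
    {s : (V → ℕ) × (V → ℕ) | (∀ j, 1 ≤ s.1 j) ∧ (∀ j, 1 ≤ s.2 j) ∧
      (∀ j, (s.2 j : ℤ) * s.1 j = q j + ∑ k ∈ univ.erase j, (w j k : ℤ) * s.1 k) ∧
      (∀ x : V → ℝ, x ≠ 0 →
        ∑ j, x j * (-(s.2 j : ℝ) * x j + ∑ k ∈ univ.erase j, (w j k : ℝ) * x k) < 0)} with hS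
  by_contra hfin
  have hinf : S.Infinite := hfin
  -- Dickson's lemma: univ in (V → ℕ) × (V → ℕ) is PWO
  have hpwo : (Set.univ : Set ((V → ℕ) × (V → ℕ))).IsPWO := by
    have h1 : (Set.univ : Set (V → ℕ)).IsPWO :=
      by simpa using Set.IsPWO.pi (s := fun _ : V => (Set.univ : Set ℕ)) (fun _ => Set.isPWO_of_wellQuasiOrderedLE Set.univ)
    have := h1.prod h1
    simpa [Set.univ_prod_univ] using this
  have f : ℕ ↪ S := Set.Infinite.natEmbedding _ hinf
  have hmem : ∀ m : ℕ, (f m : (V → ℕ) × (V → ℕ)) ∈ (Set.univ : Set _) := fun _ => trivial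
  obtain ⟨m, m', hmm', hle⟩ := hpwo.exists_lt (f := fun m => (f m : (V → ℕ) × (V → ℕ))) hmem
  -- two distinct comparable solutions
  have hne : (f m : (V → ℕ) × (V → ℕ)) ≠ (f m' : (V → ℕ) × (V → ℕ)) := by
    intro hEq
    exact absurd (f.injective (Subtype.ext hEq)) (Nat.ne_of_lt hmm')
  obtain ⟨hn1, he1, heq1, _⟩ := (f m).2
  obtain ⟨hn1', he1', heq1', hneg'⟩ := (f m').2
  set n : V → ℕ := (f m : (V → ℕ) × (V → ℕ)).1
  set e : V → ℕ := (f m : (V → ℕ) × (V → ℕ)).2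
  set n' : V → ℕ := (f m' : (V → ℕ) × (V → ℕ)).1
  set e' : V → ℕ := (f m' : (V → ℕ) × (V → ℕ)).2
  have hnle : ∀ j, n j ≤ n' j := fun j => hle.1 j
  have hele : ∀ j, e j ≤ e' j := fun j => hle.2 j
  -- real versions of the adjunction equations
  have heqR : ∀ j, (e j : ℝ) * n j = (q j : ℝ) + ∑ k ∈ univ.erase j, (w j k : ℝ) * n k := by
    intro j
    have := congrArg (fun z : ℤ => (z : ℝ)) (heq1 j)
    push_cast at this
    exact this
  have heqR' : ∀ j, (e' j : ℝ) * n' j = (q j : ℝ) + ∑ k ∈ univ.erase j, (w j k : ℝ) * n' k := by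
    intro j
    have := congrArg (fun z : ℤ => (z : ℝ)) (heq1' j)
    push_cast at this
    exact this
  by_cases hnn : n = n'
  · -- then e = e' as well, contradicting distinctness
    apply hne
    have hee : e = e' := by
      funext j
      have h1 := heq1 j
      have h2 := heq1' j
      rw [← hnn] at h2
      have : (e j : ℤ) * n j = (e' j : ℤ) * n j := h1.trans h2.symm
      have hnj : (n j : ℤ) ≠ 0 := by
        have := hn1 j
        positivity
      have := mul_right_cancel₀ hnj this
      exact_mod_cast this
    exact Prod.ext hnn hee
  · -- plug x = n' - n into the negative definite form of the larger solution
    set x : V → ℝ := fun j => (n' j : ℝ) - n j with hx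
    have hxne : x ≠ 0 := by
      intro hx0
      apply hnn
      funext j
      have : x j = 0 := congrFun hx0 j
      have : (n' j : ℝ) = n j := by simpa [hx, sub_eq_zero] using this
      exact_mod_cast this.symm
    have H := hneg' x hxne
    -- key identity for each vertex
    have key : ∀ j, (-(e' j : ℝ) * x j + ∑ k ∈ univ.erase j, (w j k : ℝ) * x k)
        = (n j : ℝ) * ((e' j : ℝ) - e j) := by
      intro j
      have hsum : ∑ k ∈ univ.erase j, (w j k : ℝ) * x k
          = (∑ k ∈ univ.erase j, (w j k : ℝ) * n' k)
            - ∑ k ∈ univ.erase j, (w j k : ℝ) * n k := by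
        rw [← Finset.sum_sub_distrib]
        exact Finset.sum_congr rfl fun k _ => by simp [hx]; ring
      have h1 := heqR j
      have h2 := heqR' j
      rw [hsum]
      simp only [hx]
      nlinarith [h1, h2]
    have Hsum : ∑ j, x j * (-(e' j : ℝ) * x j + ∑ k ∈ univ.erase j, (w j k : ℝ) * x k)
        = ∑ j, x j * ((n j : ℝ) * ((e' j : ℝ) - e j)) :=
      Finset.sum_congr rfl fun j _ => by rw [key j]
    rw [Hsum] at H
    have hnonneg : 0 ≤ ∑ j, x j * ((n j : ℝ) * ((e' j : ℝ) - e j)) := by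
      apply Finset.sum_nonneg
      intro j _
      have hxj : 0 ≤ x j := by
        simp only [hx, sub_nonneg]
        exact_mod_cast hnle j
      have hej : (0 : ℝ) ≤ (e' j : ℝ) - e j := by
        rw [sub_nonneg]
        exact_mod_cast hele j
      positivity
    linarith
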